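/- Let Ω ⊂ ℝ² be Lebesgue measurable with finite measure and let (y^l)_{l∈ℕ} ⊂ L¹(Ω; ℝ²) be a sequence satisfying |Ω \ ⋃_{n∈ℕ} ⋂_{l≥n} {x ∈ Ω : |y^n(x) − y^l(x)| ≤ 1}| = 0. Then there exist a subsequence (y^{l_j})_j, a constant C > 0, and an increasing continuous function ψ : [0,∞) → [0,∞) with lim_{t→∞} ψ(t) = ∞ such that ∫_Ω ψ(|y^{l_j}(x)|) dx ≤ C for all j ∈ ℕ. -/

import Mathlib

open Filter MeasureTheory
open scoped ENNReal

namespace UIBoundAux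

noncomputable def term (t : ℕ → ℕ) (j : ℕ) (s : ℝ) : ℝ := min (max (s - t j) 0) 1

lemma term_nonneg (t : ℕ → ℕ) (j : ℕ) (s : ℝ) : 0 ≤ term t j s :=
  le_min (le_max_right _ _) one_pos.le

lemma term_le_one (t : ℕ → ℕ) (j : ℕ) (s : ℝ) : term t j s ≤ 1 := min_le_right _ _

lemma term_eq_zero (t : ℕ → ℕ) (j : ℕ) {s : ℝ} (h : s ≤ t j) : term t j s = 0 := by
  have : max (s - t j) 0 = 0 := max_eq_right (by linarith)
  simp [term, this]

lemma term_eq_one (t : ℕ → ℕ) (j : ℕ) {s : ℝ} (h : (t j : ℝ) + 1 ≤ s) : term t j s = 1 := by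
  rw [term, max_eq_left (by linarith), min_eq_right (by linarith)]

lemma term_mono (t : ℕ → ℕ) (j : ℕ) : Monotone (term t j) := fun a b h => by
  dsimp [term]; gcongr

lemma term_continuous (t : ℕ → ℕ) (j : ℕ) : Continuous (term t j) :=
  ((continuous_id.sub continuous_const).max continuous_const).min continuous_const

lemma summable_term (t : ℕ → ℕ) (ht : ∀ j, (j : ℕ) ≤ t j) (s : ℝ) :
    Summable (fun j => term t j s) := by
  refine summable_of_ne_finset_zero (s := Finset.range ⌈s⌉₊) fun j hj => term_eq_zero t j ?_
  have hj' : ⌈s⌉₊ ≤ j := by simpa using Finset.mem_range.not.mp hj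
  calc s ≤ (⌈s⌉₊ : ℝ) := Nat.le_ceil s
    _ ≤ (j : ℝ) := by exact_mod_cast hj'
    _ ≤ (t j : ℝ) := by exact_mod_cast ht j

noncomputable def psi (t : ℕ → ℕ) (s : ℝ) : ℝ := ∑' j, term t j s

lemma psi_nonneg (t : ℕ → ℕ) (s : ℝ) : 0 ≤ psi t s := tsum_nonneg fun j => term_nonneg t j s

lemma psi_mono (t : ℕ → ℕ) (ht : ∀ j, (j : ℕ) ≤ t j) : Monotone (psi t) := fun a b h =>
  (summable_term t ht a).tsum_le_tsum (fun j => term_mono t j h) (summable_term t ht b)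

lemma psi_eq_sum (t : ℕ → ℕ) (ht : ∀ j, (j : ℕ) ≤ t j) {s : ℝ} {m : ℕ} (h : s < m) :
    psi t s = ∑ j ∈ Finset.range m, term t j s := by
  refine tsum_eq_sum fun j hj => term_eq_zero t j ?_
  have hj' : m ≤ j := by simpa using Finset.mem_range.not.mp hj
  have : (m : ℝ) ≤ t j := by exact_mod_cast hj'.trans (ht j)
  linarith

lemma psi_continuous (t : ℕ → ℕ) (ht : ∀ j, (j : ℕ) ≤ t j) : Continuous (psi t) := by
  rw [continuous_iff_continuousAt]
  intro a
  set m : ℕ := ⌈a⌉₊ + 1 with hm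
  have ham : a < (m : ℝ) := by
    calc a ≤ (⌈a⌉₊ : ℝ) := Nat.le_ceil a
      _ < (m : ℝ) := by exact_mod_cast Nat.lt_succ_self _
  have hev : (fun s => ∑ j ∈ Finset.range m, term t j s) =ᶠ[nhds a] psi t := by
    filter_upwards [Iio_mem_nhds ham] with s hs
    exact (psi_eq_sum t ht hs).symm
  exact ContinuousAt.congr
    (Continuous.continuousAt (continuous_finset_sum _ fun j _ => term_continuous t j)) hev

lemma psi_tendsto (t : ℕ → ℕ) (ht : ∀ j, (j : ℕ) ≤ t j) (htm : Monotone t) :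
    Tendsto (psi t) atTop atTop := by
  rw [tendsto_atTop]
  intro b
  filter_upwards [eventually_ge_atTop ((t ⌈b⌉₊ : ℝ) + 1)] with s hs
  have h1 : ∀ j ∈ Finset.range ⌈b⌉₊, term t j s = 1 := by
    intro j hj
    refine term_eq_one t j ?_
    have : (t j : ℝ) ≤ t ⌈b⌉₊ := by exact_mod_cast htm (Finset.mem_range.mp hj).le
    linarith
  calc b ≤ (⌈b⌉₊ : ℝ) := Nat.le_ceil b
    _ = ∑ j ∈ Finset.range ⌈b⌉₊, term t j s := by rw [Finset.sum_congr rfl h1]; simp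
    _ ≤ psi t s := (summable_term t ht s).sum_le_tsum _ (fun j _ => term_nonneg t j s)

end UIBoundAux

open UIBoundAux

/-- If a sequence `(y^l)_l ⊂ L¹(Ω; ℝ²)` satisfies
`|Ω \ ⋃_n ⋂_{l ≥ n} {x ∈ Ω : |y^n(x) − y^l(x)| ≤ 1}| = 0`, then along a subsequence the
integrals `∫_Ω ψ(|y^{l_j}|)` are uniformly bounded for some increasing continuous
`ψ : [0,∞) → [0,∞)` tending to infinity. -/
theorem exists_subseq_uniform_integral_bound
    (Ω : Set (EuclideanSpace ℝ (Fin 2))) (hΩ : MeasurableSet Ω)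
    (hfin : volume Ω < ⊤)
    (y : ℕ → EuclideanSpace ℝ (Fin 2) → EuclideanSpace ℝ (Fin 2))
    (hint : ∀ l, IntegrableOn (y l) Ω)
    (hae : volume (Ω \ ⋃ n : ℕ, ⋂ l : ℕ, ⋂ _ : n ≤ l,
      {x ∈ Ω | ‖y n x - y l x‖ ≤ 1}) = 0) :
    ∃ l : ℕ → ℕ, StrictMono l ∧ ∃ C : ℝ, 0 < C ∧ ∃ ψ : ℝ → ℝ,
      (∀ t, 0 ≤ t → 0 ≤ ψ t) ∧
      MonotoneOn ψ (Set.Ici (0 : ℝ)) ∧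
      ContinuousOn ψ (Set.Ici (0 : ℝ)) ∧
      Tendsto ψ atTop atTop ∧
      ∀ j : ℕ, ∫ x in Ω, ψ ‖y (l j) x‖ ≤ C := by
  classical
  set μ := volume.restrict Ω with hμdef
  set F : EuclideanSpace ℝ (Fin 2) → ℝ≥0∞ := fun x => ⨆ l, (‖y l x‖₊ : ℝ≥0∞) with hFdef
  have hFm : AEMeasurable F μ :=
    AEMeasurable.iSup fun l => ((hint l).aestronglyMeasurable).enorm
  have hU : μ (⋃ n : ℕ, ⋂ l : ℕ, ⋂ _ : n ≤ l, {x ∈ Ω | ‖y n x - y l x‖ ≤ 1})ᶜ = 0 := by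
    rw [hμdef, Measure.restrict_apply' hΩ, Set.inter_comm, ← Set.diff_eq]
    exact hae
  have hFlt : ∀ᵐ x ∂μ, F x < ⊤ := by
    have h1 : ∀ᵐ x ∂μ, x ∈ ⋃ n : ℕ, ⋂ l : ℕ, ⋂ _ : n ≤ l,
        {x ∈ Ω | ‖y n x - y l x‖ ≤ 1} := mem_ae_iff.mpr hU
    filter_upwards [h1] with x hx
    simp only [Set.mem_iUnion, Set.mem_iInter, Set.mem_setOf_eq] at hx
    obtain ⟨n, hn⟩ := hx
    set M : NNReal := (Finset.range (n+1)).sup (fun l => ‖y l x‖₊) + 1 with hM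
    have hb : ∀ l, (‖y l x‖₊ : ℝ≥0∞) ≤ (M : ℝ≥0∞) := by
      intro l
      rw [ENNReal.coe_le_coe]
      rcases le_or_gt l n with h | h
      · calc ‖y l x‖₊ ≤ (Finset.range (n+1)).sup (fun l => ‖y l x‖₊) :=
              Finset.le_sup (f := fun l => ‖y l x‖₊) (Finset.mem_range.mpr (Nat.lt_succ_of_le h))
          _ ≤ M := le_self_add
      · have h2 := (hn l h.le).2
        have h3 : ‖y n x - y l x‖₊ ≤ 1 := by
          rw [← NNReal.coe_le_coe]; simpa using h2
        have h4 : y n x - (y n x - y l x) = y l x := by abel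
        calc ‖y l x‖₊ = ‖y n x - (y n x - y l x)‖₊ := by rw [h4]
          _ ≤ ‖y n x‖₊ + ‖y n x - y l x‖₊ := nnnorm_sub_le _ _
          _ ≤ (Finset.range (n+1)).sup (fun l => ‖y l x‖₊) + 1 :=
              add_le_add (Finset.le_sup (f := fun l => ‖y l x‖₊)
                (Finset.mem_range.mpr (Nat.lt_succ_self n))) h3
    calc F x ≤ (M : ℝ≥0∞) := iSup_le hb
      _ < ⊤ := ENNReal.coe_lt_top
  set F' := hFm.mk F with hF'def
  have hF'meas : Measurable F' := hFm.measurable_mk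
  have hFae : F =ᵐ[μ] F' := hFm.ae_eq_mk
  have hF'lt : ∀ᵐ x ∂μ, F' x < ⊤ := by
    filter_upwards [hFlt, hFae] with x h1 h2
    rwa [← h2]
  set A : ℕ → Set (EuclideanSpace ℝ (Fin 2)) := fun k => {x | (k : ℝ≥0∞) < F' x} with hAdef
  have hAmeas : ∀ k, MeasurableSet (A k) := fun k => measurableSet_lt measurable_const hF'meas
  have hAanti : Antitone A := fun k k' h x hx => by
    simp only [hAdef, Set.mem_setOf_eq] at hx ⊢
    exact lt_of_le_of_lt (Nat.cast_le.mpr h) hx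
  have hInter : μ (⋂ k, A k) = 0 := by
    refine measure_mono_null (fun x hx => ?_) (ae_iff.mp hF'lt)
    simp only [Set.mem_iInter] at hx
    simp only [Set.mem_setOf_eq, not_lt, top_le_iff]
    by_contra h
    obtain ⟨k, hk⟩ := ENNReal.exists_nat_gt h
    exact absurd (hx k) (not_lt.mpr hk.le)
  have hμfin : μ (A 0) ≠ ⊤ := by
    refine (lt_of_le_of_lt (measure_mono (Set.subset_univ _)) ?_).ne
    rw [hμdef, Measure.restrict_apply_univ]
    exact hfin
  have h0 : Tendsto (fun k => μ (A k)) atTop (nhds 0) := by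
    have := tendsto_measure_iInter_atTop (fun k => (hAmeas k).nullMeasurableSet) hAanti ⟨0, hμfin⟩
    rwa [hInter] at this
  have hN : ∀ j : ℕ, ∃ N, ∀ k ≥ N, μ (A k) ≤ 2⁻¹ ^ j := fun j =>
    (ENNReal.tendsto_atTop_zero.mp h0) (2⁻¹ ^ j)
      (ENNReal.pow_pos (ENNReal.inv_pos.mpr (by norm_num)) j)
  choose N hNs using hN
  set t : ℕ → ℕ := fun j => j + (Finset.range (j+1)).sup N with htdef
  have htle : ∀ j, j ≤ t j := fun j => Nat.le_add_right _ _
  have htsm : StrictMono t := by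
    refine strictMono_nat_of_lt_succ fun j => ?_
    have : (Finset.range (j+1)).sup N ≤ (Finset.range (j+1+1)).sup N :=
      Finset.sup_mono (Finset.range_subset_range.mpr (by omega))
    simp only [htdef]
    omega
  have htm : Monotone t := htsm.monotone
  have hμA : ∀ j, μ (A (t j)) ≤ 2⁻¹ ^ j := fun j =>
    hNs j (t j) (le_trans (Finset.le_sup (Finset.mem_range.mpr (Nat.lt_succ_self j)))
      (Nat.le_add_left _ _))
  refine ⟨id, strictMono_id, 2, two_pos, psi t, fun s _ => psi_nonneg t s,
    (psi_mono t htle).monotoneOn _, (psi_continuous t htle).continuousOn,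
    psi_tendsto t htle htm, ?_⟩
  intro l
  simp only [id_eq]
  have hnorm_asm : AEStronglyMeasurable (fun x => ‖y l x‖) μ := (hint l).aestronglyMeasurable.norm
  have hψm : AEStronglyMeasurable (fun x => psi t ‖y l x‖) μ :=
    (psi_continuous t htle).comp_aestronglyMeasurable hnorm_asm
  have hper : ∀ i : ℕ, ∫⁻ x, ENNReal.ofReal (term t i ‖y l x‖) ∂μ ≤ μ (A (t i)) := by
    intro i
    have hab : ∀ᵐ x ∂μ, ENNReal.ofReal (term t i ‖y l x‖) ≤ (A (t i)).indicator 1 x := by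
      filter_upwards [hFae] with x hx
      by_cases hA' : x ∈ A (t i)
      · rw [Set.indicator_of_mem hA', Pi.one_apply]
        calc ENNReal.ofReal (term t i ‖y l x‖) ≤ ENNReal.ofReal 1 :=
              ENNReal.ofReal_le_ofReal (term_le_one t i _)
          _ = 1 := ENNReal.ofReal_one
      · rw [Set.indicator_of_notMem hA']
        have h1 : F' x ≤ ((t i : ℕ) : ℝ≥0∞) := not_lt.mp hA'
        have h2 : (‖y l x‖₊ : ℝ≥0∞) ≤ ((t i : ℕ) : ℝ≥0∞) :=
          le_trans (le_trans (le_iSup (fun l => (‖y l x‖₊ : ℝ≥0∞)) l) (le_of_eq hx)) h1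
        have h3 : ‖y l x‖ ≤ (t i : ℝ) := by
          rw [← enorm_eq_nnnorm, ← ofReal_norm, ← ENNReal.ofReal_natCast] at h2
          exact (ENNReal.ofReal_le_ofReal_iff (Nat.cast_nonneg _)).mp h2
        simp [term_eq_zero t i h3]
    calc ∫⁻ x, ENNReal.ofReal (term t i ‖y l x‖) ∂μ
        ≤ ∫⁻ x, (A (t i)).indicator 1 x ∂μ := lintegral_mono_ae hab
      _ = μ (A (t i)) := lintegral_indicator_one (hAmeas _)
  have hbound : ∫⁻ x, ENNReal.ofReal (psi t ‖y l x‖) ∂μ ≤ 2 := by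
    have heq : ∀ z : ℝ, ENNReal.ofReal (psi t z) = ∑' i, ENNReal.ofReal (term t i z) :=
      fun z => ENNReal.ofReal_tsum_of_nonneg (fun i => term_nonneg t i z) (summable_term t htle z)
    calc ∫⁻ x, ENNReal.ofReal (psi t ‖y l x‖) ∂μ
        = ∑' i, ∫⁻ x, ENNReal.ofReal (term t i ‖y l x‖) ∂μ := by
          simp_rw [heq]
          exact lintegral_tsum fun i =>
            ((ENNReal.measurable_ofReal.comp (term_continuous t i).measurable).comp_aemeasurable
              hnorm_asm.aemeasurable)
      _ ≤ ∑' i, μ (A (t i)) := ENNReal.tsum_le_tsum hper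
      _ ≤ ∑' i : ℕ, 2⁻¹ ^ i := ENNReal.tsum_le_tsum hμA
      _ = 2 := by rw [ENNReal.tsum_geometric, ENNReal.one_sub_inv_two, inv_inv]
  rw [show (∫ x in Ω, psi t ‖y l x‖) = ∫ x, psi t ‖y l x‖ ∂μ from rfl,
    integral_eq_lintegral_of_nonneg_ae (Eventually.of_forall fun x => psi_nonneg t _) hψm]
  exact ENNReal.toReal_le_of_le_ofReal two_pos.le (by rwa [ENNReal.ofReal_ofNat])
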